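/- For every natural number N there exists ε > 0 such that, with a = 1 and b = 2 − ε and f(x) = |||x − 1| − a| − b|, the orbit of x = ε under f does not enter the 2-periodic interval [b − a, 1] = [1 − ε, 1] within the first N iterations: fᵏ(ε) ∉ [1 − ε, 1] for all k ≤ N. -/

import Mathlib

theorem arbitrarily_long_preperiod (N : ℕ) :
    ∃ ε : ℝ, 0 < ε ∧ ε < 1 ∧
      ∀ f : ℝ → ℝ, (∀ x, f x = |(|(|x - 1|) - 1|) - (2 - ε)|) →
        ∀ k : ℕ, k ≤ N → f^[k] ε ∉ Set.Icc (1 - ε) 1 := by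
  set ε : ℝ := 1 / (2 * (N + 2)) with hεdef
  have hN : (0:ℝ) ≤ N := Nat.cast_nonneg N
  have hεpos : 0 < ε := by positivity
  have hhalf : ((N:ℝ) + 2) * ε = 1 / 2 := by
    rw [hεdef, mul_one_div, div_eq_iff (by positivity)]; ring
  have hε4 : ε ≤ 1 / 4 := by
    nlinarith [hhalf]
  refine ⟨ε, hεpos, by linarith, ?_⟩
  intro f hf
  have hsmall : ∀ k : ℕ, k ≤ N → ((k:ℝ) + 2) * ε ≤ 1 / 2 := by
    intro k hk
    have : (k:ℝ) ≤ N := Nat.cast_le.mpr hk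
    nlinarith [hhalf]
  have key : ∀ k : ℕ, k ≤ N → f^[k + 1] ε = 2 - ((k:ℝ) + 2) * ε := by
    intro k hk
    induction k with
    | zero =>
      rw [zero_add, Function.iterate_one, hf]
      have h1 : |(ε - 1)| = 1 - ε := by rw [abs_of_nonpos (by linarith)]; ring
      rw [h1]
      have h2 : |(1 - ε - 1)| = ε := by rw [abs_of_nonpos (by linarith)]; ring
      rw [h2]
      have h3 : |(ε - (2 - ε))| = 2 - 2 * ε := by
        rw [abs_of_nonpos (by linarith)]; ring
      rw [h3]; push_cast; ring
    | succ j ih =>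
      have hj : j ≤ N := Nat.le_of_succ_le hk
      have hjs : ((j:ℝ) + 2) * ε ≤ 1 / 2 := hsmall j hj
      have hjs2 : 2 * ε ≤ ((j:ℝ) + 2) * ε := by nlinarith [Nat.cast_nonneg (α := ℝ) j]
      rw [Function.iterate_succ_apply', ih hj, hf]
      have h1 : |(2 - ((j:ℝ) + 2) * ε - 1)| = 1 - ((j:ℝ) + 2) * ε := by
        rw [abs_of_nonneg (by linarith)]; ring
      rw [h1]
      have h2 : |(1 - ((j:ℝ) + 2) * ε - 1)| = ((j:ℝ) + 2) * ε := by
        rw [abs_of_nonpos (by linarith)]; ring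
      rw [h2]
      have h3 : |(((j:ℝ) + 2) * ε - (2 - ε))| = 2 - (((j:ℝ) + 2) * ε + ε) := by
        rw [abs_of_nonpos (by linarith)]; ring
      rw [h3]; push_cast; ring
  intro k hk
  match k with
  | 0 =>
    simp only [Function.iterate_zero, id]
    intro hmem
    obtain ⟨h1, _⟩ := hmem
    linarith
  | j + 1 =>
    have hj : j ≤ N := Nat.le_of_succ_le hk
    rw [key j hj]
    intro hmem
    obtain ⟨_, h2⟩ := hmem
    have := hsmall j hj
    linarith
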